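/- Let (S, ⪯) be a rooted tree and F : S → (0, 1]. Then F is the upper probability function of a probability density function on S (with support S) if and only if: (1) F(e) = 1; (2) F(x) > ∑_{y ∈ A(x)} F(y) for every x ∈ S; and (3) ∑_{x ∈ A_n} F(x) → 0 as n → ∞. -/

import Mathlib

open scoped ENNReal NNReal
open Filter

/-- The depth of a node in a rooted tree (a locally finite poset with minimum in which
every down-set is a chain): `d x = #(D[x]) − 1`. -/
noncomputable def depth {S : Type*} [PartialOrder S] (x : S) : ℕ :=
  Nat.card {t : S // t ≤ x} - 1

section Tree
variable {S : Type*} [PartialOrder S] [OrderBot S]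

lemma depth_card (hfin : ∀ x : S, {t : S | t ≤ x}.Finite) (x : S) :
    Nat.card {t : S // t ≤ x} = depth x + 1 := by
  have h0 : 0 < Nat.card {t : S // t ≤ x} := by
    rw [show {t : S // t ≤ x} = ↥{t : S | t ≤ x} from rfl, Nat.card_coe_set_eq]
    exact (Set.ncard_pos (hfin x)).mpr ⟨⊥, bot_le⟩
  simp only [depth]; omega

lemma depth_lt (hfin : ∀ x : S, {t : S | t ≤ x}.Finite) {x y : S} (h : x < y) :
    depth x < depth y := by
  have hx := depth_card hfin x
  have hy := depth_card hfin y
  have hcard : Nat.card {t : S // t ≤ x} < Nat.card {t : S // t ≤ y} := by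
    rw [show {t : S // t ≤ x} = ↥{t : S | t ≤ x} from rfl, Nat.card_coe_set_eq]
    rw [show {t : S // t ≤ y} = ↥{t : S | t ≤ y} from rfl, Nat.card_coe_set_eq]
    refine Set.ncard_lt_ncard ?_ (hfin y)
    constructor
    · exact fun t ht => le_trans ht h.le
    · intro hsub
      exact absurd (show y ≤ x from hsub (le_refl y)) h.not_ge
  omega

lemma depth_le (hfin : ∀ x : S, {t : S | t ≤ x}.Finite) {x y : S} (h : x ≤ y) :
    depth x ≤ depth y := by
  rcases eq_or_lt_of_le h with rfl | h
  · exact le_rfl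
  · exact (depth_lt hfin h).le

lemma eq_of_le_of_depth_le (hfin : ∀ x : S, {t : S | t ≤ x}.Finite) {x y : S}
    (h : x ≤ y) (hd : depth y ≤ depth x) : x = y := by
  rcases eq_or_lt_of_le h with rfl | h
  · rfl
  · exact absurd hd (by simpa using depth_lt hfin h)

lemma exists_ancestor (hfin : ∀ x : S, {t : S | t ≤ x}.Finite)
    (htree : ∀ x a b : S, a ≤ x → b ≤ x → a ≤ b ∨ b ≤ a)
    (t : S) {n : ℕ} (hn : n ≤ depth t) : ∃ x, x ≤ t ∧ depth x = n := by
  classical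
  set D := (hfin t).toFinset with hD
  have hmem : ∀ a, a ∈ D ↔ a ≤ t := by intro a; simp [hD]
  have hcard : D.card = depth t + 1 := by
    rw [hD, ← Set.ncard_eq_toFinset_card _ (hfin t), ← Nat.card_coe_set_eq]
    exact depth_card hfin t
  have hinj : Set.InjOn depth (D : Set S) := by
    intro a ha b hb hab
    rcases htree t a b ((hmem a).1 ha) ((hmem b).1 hb) with h | h
    · exact eq_of_le_of_depth_le hfin h hab.ge
    · exact (eq_of_le_of_depth_le hfin h hab.le).symm
  have hsub : D.image depth ⊆ Finset.range (depth t + 1) := by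
    intro m hm
    obtain ⟨a, ha, rfl⟩ := Finset.mem_image.1 hm
    exact Finset.mem_range.2 (by have := depth_le hfin ((hmem a).1 ha); omega)
  have heq : D.image depth = Finset.range (depth t + 1) := by
    apply Finset.eq_of_subset_of_card_le hsub
    rw [Finset.card_range, Finset.card_image_of_injOn hinj, hcard]
  have : n ∈ D.image depth := by rw [heq]; exact Finset.mem_range.2 (by omega)
  obtain ⟨a, ha, h⟩ := Finset.mem_image.1 this
  exact ⟨a, (hmem a).1 ha, h⟩

lemma ancestor_unique (hfin : ∀ x : S, {t : S | t ≤ x}.Finite)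
    (htree : ∀ x a b : S, a ≤ x → b ≤ x → a ≤ b ∨ b ≤ a)
    {t x y : S} (hx : x ≤ t) (hy : y ≤ t) (h : depth x = depth y) : x = y := by
  rcases htree t x y hx hy with h' | h'
  · exact eq_of_le_of_depth_le hfin h' h.ge
  · exact (eq_of_le_of_depth_le hfin h' h.le).symm

lemma depth_covby (hfin : ∀ x : S, {t : S | t ≤ x}.Finite)
    (htree : ∀ x a b : S, a ≤ x → b ≤ x → a ≤ b ∨ b ≤ a)
    {x y : S} (h : x ⋖ y) : depth y = depth x + 1 := by
  have h1 : depth x < depth y := depth_lt hfin h.lt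
  by_contra hne
  have h2 : depth x + 1 ≤ depth y := h1
  obtain ⟨z, hzy, hz⟩ := exists_ancestor hfin htree y (n := depth x + 1) h2
  have hxz : x < z := by
    rcases htree y x z h.lt.le hzy with h' | h'
    · exact lt_of_le_of_ne h' (by intro he; rw [he] at hz; omega)
    · exact absurd (depth_le hfin h') (by omega)
  have hzy' : z < y := lt_of_le_of_ne hzy (by intro he; rw [he] at hz; omega)
  exact h.2 hxz hzy'

lemma covby_of_depth (hfin : ∀ x : S, {t : S | t ≤ x}.Finite)
    {x y : S} (hxy : x ≤ y) (hd : depth y = depth x + 1) : x ⋖ y := by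
  constructor
  · exact lt_of_le_of_ne hxy (by intro he; rw [he] at hd; omega)
  · intro z hxz hzy
    have h1 := depth_lt hfin hxz
    have h2 := depth_lt hfin hzy
    omega

lemma exists_parent (hfin : ∀ x : S, {t : S | t ≤ x}.Finite)
    (htree : ∀ x a b : S, a ≤ x → b ≤ x → a ≤ b ∨ b ≤ a)
    {x t : S} (h : x < t) : ∃ y, x ⋖ y ∧ y ≤ t := by
  obtain ⟨z, hzt, hz⟩ := exists_ancestor hfin htree t (n := depth x + 1)
    (depth_lt hfin h)
  have hxz : x ≤ z := by
    rcases htree t x z h.le hzt with h' | h'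
    · exact h'
    · exact absurd (depth_le hfin h') (by omega)
  exact ⟨z, covby_of_depth hfin hxz hz, hzt⟩

end Tree

section Sums
set_option linter.unusedSectionVars false
variable {S : Type*} [PartialOrder S] [OrderBot S]

lemma tsum_le_of_subset (g : S → ℝ≥0∞) {A B : Set S} (h : A ⊆ B) :
    ∑' (t : A), g t ≤ ∑' (t : B), g t := by
  rw [tsum_subtype, tsum_subtype]
  exact ENNReal.tsum_le_tsum
    (Set.indicator_le_indicator_of_subset h (fun _ => zero_le))

lemma tsum_split (g : S → ℝ≥0∞) {A B C : Set S} (h : C = A ∪ B) (hd : Disjoint A B) :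
    ∑' (t : C), g t = ∑' (t : A), g t + ∑' (t : B), g t := by
  rw [h]
  exact Summable.tsum_union_disjoint hd ENNReal.summable ENNReal.summable

lemma point_split (g : S → ℝ≥0∞) (x : S) :
    ∑' (t : {t : S // x ≤ t}), g t = g x + ∑' (t : {t : S // x < t}), g t := by
  have h : ∑' (t : ↥{t : S | x ≤ t}), g t
      = ∑' (t : ↥({x} : Set S)), g t + ∑' (t : ↥{t : S | x < t}), g t := by
    refine tsum_split g ?_ ?_
    · ext t
      simp only [Set.mem_setOf_eq, Set.mem_union, Set.mem_singleton_iff]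
      constructor
      · intro ht
        rcases eq_or_lt_of_le ht with h | h
        · exact Or.inl h.symm
        · exact Or.inr h
      · rintro (rfl | h)
        · exact le_rfl
        · exact h.le
    · rw [Set.disjoint_left]
      intro a ha ha'
      rw [Set.mem_singleton_iff] at ha
      subst ha
      exact absurd ha' (lt_irrefl a)
  rw [tsum_singleton] at h
  exact h

lemma children_split (hfin : ∀ x : S, {t : S | t ≤ x}.Finite)
    (htree : ∀ x a b : S, a ≤ x → b ≤ x → a ≤ b ∨ b ≤ a) (g : S → ℝ≥0∞) (x : S) :
    ∑' (t : {t : S // x < t}), g t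
      = ∑' (y : {y : S // x ⋖ y}), ∑' (t : {t : S // (y : S) ≤ t}), g t := by
  have key : ∃ e : (Σ y : {y : S // x ⋖ y}, {t : S // (y : S) ≤ t}) ≃ {t : S // x < t},
      ∀ c, ((e c : {t : S // x < t}) : S) = (c.2 : S) := by
    refine ⟨Equiv.ofBijective (fun p => ⟨p.2, lt_of_lt_of_le p.1.2.lt p.2.2⟩) ⟨?_, ?_⟩,
      fun c => rfl⟩
    · rintro ⟨⟨y, hy⟩, ⟨t, ht⟩⟩ ⟨⟨y', hy'⟩, ⟨t', ht'⟩⟩ hpq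
      have htt : t = t' := congrArg Subtype.val hpq
      subst htt
      have hyy : y = y' := ancestor_unique hfin htree ht ht'
        (by rw [depth_covby hfin htree hy, depth_covby hfin htree hy'])
      subst hyy
      rfl
    · rintro ⟨t, ht⟩
      obtain ⟨y, hy, hyt⟩ := exists_parent hfin htree ht
      exact ⟨⟨⟨y, hy⟩, ⟨t, hyt⟩⟩, rfl⟩
  obtain ⟨e, he⟩ := key
  calc ∑' (t : {t : S // x < t}), g t
      = ∑' (c : Σ y : {y : S // x ⋖ y}, {t : S // (y : S) ≤ t}), g (e c) :=
        (e.tsum_eq fun t : {t : S // x < t} => g t).symm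
    _ = ∑' (c : Σ y : {y : S // x ⋖ y}, {t : S // (y : S) ≤ t}), g c.2 :=
        tsum_congr fun c => by rw [he c]
    _ = ∑' (y : {y : S // x ⋖ y}), ∑' (t : {t : S // (y : S) ≤ t}), g t :=
        ENNReal.tsum_sigma'
          (fun c : Σ y : {y : S // x ⋖ y}, {t : S // (y : S) ≤ t} => g c.2)

lemma level_split (hfin : ∀ x : S, {t : S | t ≤ x}.Finite)
    (htree : ∀ x a b : S, a ≤ x → b ≤ x → a ≤ b ∨ b ≤ a) (g : S → ℝ≥0∞)
    {x : S} {N : ℕ} (hN : depth x ≤ N) :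
    ∑' (t : {t : S // x ≤ t ∧ depth t = N + 1}), g t
      = ∑' (y : {y : S // x ≤ y ∧ depth y = N}), ∑' (t : {t : S // (y : S) ⋖ t}), g t := by
  have key : ∃ e : (Σ y : {y : S // x ≤ y ∧ depth y = N}, {t : S // (y : S) ⋖ t})
      ≃ {t : S // x ≤ t ∧ depth t = N + 1},
      ∀ c, ((e c : {t : S // x ≤ t ∧ depth t = N + 1}) : S) = (c.2 : S) := by
    refine ⟨Equiv.ofBijective (fun p => ⟨p.2, p.1.2.1.trans p.2.2.lt.le,
      by rw [depth_covby hfin htree p.2.2, p.1.2.2]⟩) ⟨?_, ?_⟩, fun c => rfl⟩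
    · rintro ⟨⟨y, hy⟩, ⟨t, ht⟩⟩ ⟨⟨y', hy'⟩, ⟨t', ht'⟩⟩ hpq
      have htt : t = t' := congrArg Subtype.val hpq
      subst htt
      have hyy : y = y' := ancestor_unique hfin htree ht.lt.le ht'.lt.le
        (by rw [hy.2, hy'.2])
      subst hyy
      rfl
    · rintro ⟨t, hxt, hdt⟩
      obtain ⟨y, hyt, hdy⟩ := exists_ancestor hfin htree t (n := N) (by omega)
      have hxy : x ≤ y := by
        rcases htree t x y hxt hyt with h | h
        · exact h
        · exact (eq_of_le_of_depth_le hfin h (by rw [hdy]; exact hN)).ge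
      have hcov : y ⋖ t := covby_of_depth hfin hyt (by omega)
      exact ⟨⟨⟨y, hxy, hdy⟩, ⟨t, hcov⟩⟩, rfl⟩
  obtain ⟨e, he⟩ := key
  calc ∑' (t : {t : S // x ≤ t ∧ depth t = N + 1}), g t
      = ∑' (c : Σ y : {y : S // x ≤ y ∧ depth y = N}, {t : S // (y : S) ⋖ t}), g (e c) :=
        (e.tsum_eq fun t : {t : S // x ≤ t ∧ depth t = N + 1} => g t).symm
    _ = ∑' (c : Σ y : {y : S // x ≤ y ∧ depth y = N}, {t : S // (y : S) ⋖ t}), g c.2 :=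
        tsum_congr fun c => by rw [he c]
    _ = _ := ENNReal.tsum_sigma'
          (fun c : Σ y : {y : S // x ≤ y ∧ depth y = N}, {t : S // (y : S) ⋖ t} => g c.2)

lemma tail_split (hfin : ∀ x : S, {t : S | t ≤ x}.Finite)
    (htree : ∀ x a b : S, a ≤ x → b ≤ x → a ≤ b ∨ b ≤ a) (g : S → ℝ≥0∞) (n : ℕ) :
    ∑' (x : {x : S // depth x = n}), ∑' (t : {t : S // (x : S) ≤ t}), g t
      = ∑' (t : {t : S // n ≤ depth t}), g t := by
  have key : ∃ e : (Σ x : {x : S // depth x = n}, {t : S // (x : S) ≤ t})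
      ≃ {t : S // n ≤ depth t},
      ∀ c, ((e c : {t : S // n ≤ depth t}) : S) = (c.2 : S) := by
    refine ⟨Equiv.ofBijective
      (fun p => ⟨p.2, le_of_eq_of_le p.1.2.symm (depth_le hfin p.2.2)⟩) ⟨?_, ?_⟩,
      fun c => rfl⟩
    · rintro ⟨⟨y, hy⟩, ⟨t, ht⟩⟩ ⟨⟨y', hy'⟩, ⟨t', ht'⟩⟩ hpq
      have htt : t = t' := congrArg Subtype.val hpq
      subst htt
      have hyy : y = y' := ancestor_unique hfin htree ht ht' (by rw [hy, hy'])
      subst hyy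
      rfl
    · rintro ⟨t, ht⟩
      obtain ⟨y, hyt, hdy⟩ := exists_ancestor hfin htree t ht
      exact ⟨⟨⟨y, hdy⟩, ⟨t, hyt⟩⟩, rfl⟩
  obtain ⟨e, he⟩ := key
  calc ∑' (x : {x : S // depth x = n}), ∑' (t : {t : S // (x : S) ≤ t}), g t
      = ∑' (c : Σ x : {x : S // depth x = n}, {t : S // (x : S) ≤ t}), g c.2 :=
        (ENNReal.tsum_sigma'
          (fun c : Σ x : {x : S // depth x = n}, {t : S // (x : S) ≤ t} => g c.2)).symm
    _ = ∑' (c : Σ x : {x : S // depth x = n}, {t : S // (x : S) ≤ t}), g (e c) :=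
        tsum_congr fun c => by rw [he c]
    _ = ∑' (t : {t : S // n ≤ depth t}), g t :=
        e.tsum_eq fun t : {t : S // n ≤ depth t} => g t

lemma lev_self (hfin : ∀ x : S, {t : S | t ≤ x}.Finite) (g : S → ℝ≥0∞) (x : S) :
    ∑' (t : {t : S // x ≤ t ∧ depth t = depth x}), g t = g x := by
  have hb : ∀ t : {t : S // x ≤ t ∧ depth t = depth x},
      t = (⟨x, le_refl x, rfl⟩ : {t : S // x ≤ t ∧ depth t = depth x}) := by
    rintro ⟨t, hxt, hdt⟩
    exact Subtype.ext (eq_of_le_of_depth_le hfin hxt hdt.le).symm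
  rw [tsum_eq_single (⟨x, le_refl x, rfl⟩ : {t : S // x ≤ t ∧ depth t = depth x})
    (fun b hb' => absurd (hb b) hb')]

end Sums

section Key
set_option linter.unusedSectionVars false
variable {S : Type*} [PartialOrder S] [OrderBot S]

/-- The sum of `G` over the children of `t`. -/
noncomputable def chSum (G : S → ℝ≥0∞) (t : S) : ℝ≥0∞ := ∑' y : {y : S // t ⋖ y}, G y

/-- The residual mass at `t`. -/
noncomputable def resid (G : S → ℝ≥0∞) (t : S) : ℝ≥0∞ := G t - chSum G t

lemma key_lemma (hfin : ∀ x : S, {t : S | t ≤ x}.Finite)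
    (htree : ∀ x a b : S, a ≤ x → b ≤ x → a ≤ b ∨ b ≤ a)
    (G : S → ℝ≥0∞) (hGne : ∀ x : S, G x ≠ ⊤)
    (hCG : ∀ t : S, chSum G t ≤ G t)
    (h3 : Filter.Tendsto (fun n : ℕ => ∑' z : {z : S // depth z = n}, G z)
      Filter.atTop (nhds 0)) (x : S) :
    ∑' t : {t : S // x ≤ t}, resid G t = G x := by
  have hlev : ∀ N, depth x ≤ N →
      (∑' t : {t : S // x ≤ t ∧ depth t = N}, resid G t)
        + (∑' t : {t : S // x ≤ t ∧ depth t = N + 1}, G t)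
      = ∑' t : {t : S // x ≤ t ∧ depth t = N}, G t := by
    intro N hN
    rw [level_split hfin htree G hN, ← ENNReal.tsum_add]
    exact tsum_congr fun t => tsub_add_cancel_of_le (hCG t)
  have hPT : ∀ N, depth x ≤ N →
      (∑' t : {t : S // x ≤ t ∧ depth t ≤ N}, resid G t)
        + (∑' t : {t : S // x ≤ t ∧ depth t = N + 1}, G t) = G x := by
    refine Nat.le_induction ?_ ?_
    · have hseteq : {t : S | x ≤ t ∧ depth t ≤ depth x}
          = {t : S | x ≤ t ∧ depth t = depth x} := by
        ext t
        constructor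
        · rintro ⟨h', hd⟩
          exact ⟨h', le_antisymm hd (depth_le hfin h')⟩
        · rintro ⟨h', hd⟩
          exact ⟨h', hd.le⟩
      have hPd : (∑' t : {t : S // x ≤ t ∧ depth t ≤ depth x}, resid G t)
          = ∑' t : {t : S // x ≤ t ∧ depth t = depth x}, resid G t := by
        show (∑' t : ↥{t : S | x ≤ t ∧ depth t ≤ depth x}, resid G t)
          = ∑' t : ↥{t : S | x ≤ t ∧ depth t = depth x}, resid G t
        rw [hseteq]
      rw [hPd, hlev (depth x) le_rfl]
      exact lev_self hfin G x
    · intro N hN ih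
      have hsplit : (∑' t : {t : S // x ≤ t ∧ depth t ≤ N + 1}, resid G t)
          = (∑' t : {t : S // x ≤ t ∧ depth t ≤ N}, resid G t)
            + ∑' t : {t : S // x ≤ t ∧ depth t = N + 1}, resid G t := by
        refine tsum_split (resid G) ?_ ?_
        · ext t
          show (x ≤ t ∧ depth t ≤ N + 1) ↔ (x ≤ t ∧ depth t ≤ N) ∨ (x ≤ t ∧ depth t = N + 1)
          constructor
          · rintro ⟨h', hd⟩
            rcases Nat.lt_or_ge (depth t) (N + 1) with h'' | h''
            · exact Or.inl ⟨h', by omega⟩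
            · exact Or.inr ⟨h', by omega⟩
          · rintro (⟨h', hd⟩ | ⟨h', hd⟩)
            · exact ⟨h', by omega⟩
            · exact ⟨h', by omega⟩
        · refine Set.disjoint_left.mpr ?_
          rintro t ⟨h', hd⟩ ⟨h'', hd'⟩
          omega
      rw [hsplit, add_assoc, hlev (N + 1) (by omega), ih]
  have hPmono : ∀ {M N : ℕ}, M ≤ N →
      (∑' t : {t : S // x ≤ t ∧ depth t ≤ M}, resid G t)
        ≤ ∑' t : {t : S // x ≤ t ∧ depth t ≤ N}, resid G t := by
    intro M N hMN
    refine tsum_le_of_subset (resid G) ?_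
    rintro t ⟨h', hd⟩
    exact ⟨h', hd.trans hMN⟩
  have hPle : ∀ N, (∑' t : {t : S // x ≤ t ∧ depth t ≤ N}, resid G t) ≤ G x := by
    intro N
    calc (∑' t : {t : S // x ≤ t ∧ depth t ≤ N}, resid G t)
        ≤ ∑' t : {t : S // x ≤ t ∧ depth t ≤ max N (depth x)}, resid G t :=
          hPmono (le_max_left _ _)
      _ ≤ (∑' t : {t : S // x ≤ t ∧ depth t ≤ max N (depth x)}, resid G t)
            + ∑' t : {t : S // x ≤ t ∧ depth t = max N (depth x) + 1}, G t := le_self_add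
      _ = G x := hPT _ (le_max_right _ _)
  have htotub : (∑' t : {t : S // x ≤ t}, resid G t) ≤ G x := by
    rw [show (∑' t : {t : S // x ≤ t}, resid G t)
        = ∑' t : S, Set.indicator {t : S | x ≤ t} (resid G) t from tsum_subtype _ _]
    rw [ENNReal.tsum_eq_iSup_sum]
    refine iSup_le fun s => ?_
    refine le_trans ?_ (hPle (s.sup depth))
    calc ∑ t ∈ s, Set.indicator {t : S | x ≤ t} (resid G) t
        ≤ ∑ t ∈ s, Set.indicator {t : S | x ≤ t ∧ depth t ≤ s.sup depth} (resid G) t := by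
          refine Finset.sum_le_sum fun t ht => ?_
          by_cases hxt : x ≤ t
          · rw [Set.indicator_of_mem (show t ∈ {t : S | x ≤ t} from hxt),
              Set.indicator_of_mem
              (show t ∈ {t : S | x ≤ t ∧ depth t ≤ s.sup depth} from ⟨hxt, Finset.le_sup ht⟩)]
          · rw [Set.indicator_of_notMem (show t ∉ {t : S | x ≤ t} from hxt)]
            exact zero_le
      _ ≤ ∑' t : S, Set.indicator {t : S | x ≤ t ∧ depth t ≤ s.sup depth} (resid G) t :=
          ENNReal.sum_le_tsum s
      _ = ∑' t : {t : S // x ≤ t ∧ depth t ≤ s.sup depth}, resid G t :=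
          (tsum_subtype _ _).symm
  have htotlb : G x ≤ ∑' t : {t : S // x ≤ t}, resid G t := by
    refine ENNReal.le_of_forall_pos_le_add fun ε hε _ => ?_
    obtain ⟨N₀, hN₀⟩ := ENNReal.tendsto_atTop_zero.mp h3 (ε : ℝ≥0∞)
      (by exact_mod_cast hε)
    have hTA : (∑' t : {t : S // x ≤ t ∧ depth t = max (depth x) N₀ + 1}, G t)
        ≤ (ε : ℝ≥0∞) := by
      refine le_trans ?_ (hN₀ (max (depth x) N₀ + 1) (by omega))
      refine tsum_le_of_subset G ?_
      rintro t ⟨h', hd⟩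
      exact hd
    calc G x = (∑' t : {t : S // x ≤ t ∧ depth t ≤ max (depth x) N₀}, resid G t)
          + ∑' t : {t : S // x ≤ t ∧ depth t = max (depth x) N₀ + 1}, G t :=
          (hPT _ (le_max_left _ _)).symm
      _ ≤ (∑' t : {t : S // x ≤ t}, resid G t) + ε := by
          refine add_le_add ?_ hTA
          refine tsum_le_of_subset (resid G) ?_
          rintro t ⟨h', _⟩
          exact h'
  exact le_antisymm htotub htotlb

end Key

set_option maxHeartbeats 1000000 in
/-- Let `(S, ⪯)` be a rooted tree (a countable poset with minimum `e`,
finite totally ordered down-sets). A function `F : S → (0,1]` is the UPF of a PDF on `S`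
(with support `S`) iff `F(e) = 1`, `F(x) > ∑_{y ∈ A(x)} F(y)` for every `x` (where
`A(x)` is the set of children of `x`), and `∑_{x ∈ A_n} F(x) → 0` as `n → ∞` (where
`A_n` is the set of nodes of depth `n`). -/
theorem tree_upf_characterization
    {S : Type*} [Countable S] [PartialOrder S] [OrderBot S]
    (hfin : ∀ x : S, {t : S | t ≤ x}.Finite)
    (htree : ∀ x a b : S, a ≤ x → b ≤ x → a ≤ b ∨ b ≤ a)
    (F : S → ℝ) (hF0 : ∀ x : S, 0 < F x) (hF1 : ∀ x : S, F x ≤ 1) :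
    (∃ f : S → ℝ≥0, (∀ x : S, 0 < f x) ∧ (∑' x : S, (f x : ℝ≥0∞) = 1) ∧
      ∀ x : S, ENNReal.ofReal (F x) = ∑' t : {t : S // x ≤ t}, (f t : ℝ≥0∞))
    ↔
    (F ⊥ = 1 ∧
     (∀ x : S, ∑' y : {y : S // x ⋖ y}, ENNReal.ofReal (F y) < ENNReal.ofReal (F x)) ∧
     Tendsto (fun n : ℕ => ∑' x : {x : S // depth x = n}, ENNReal.ofReal (F x))
       atTop (nhds 0)) := by
  classical
  constructor
  · rintro ⟨f, hfpos, hfsum, hUPF⟩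
    have hbotsum : (∑' t : {t : S // (⊥ : S) ≤ t}, (f t : ℝ≥0∞)) = ∑' t : S, (f t : ℝ≥0∞) :=
      (Equiv.subtypeUnivEquiv (fun t => bot_le)).tsum_eq (fun t : S => (f t : ℝ≥0∞))
    refine ⟨?_, ?_, ?_⟩
    · have h : ENNReal.ofReal (F ⊥) = 1 := (hUPF ⊥).trans (hbotsum.trans hfsum)
      have h' := congrArg ENNReal.toReal h
      rwa [ENNReal.toReal_ofReal (hF0 ⊥).le, ENNReal.toReal_one] at h'
    · intro x
      have key : ENNReal.ofReal (F x)
          = (∑' y : {y : S // x ⋖ y}, ENNReal.ofReal (F y)) + (f x : ℝ≥0∞) := by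
        rw [hUPF x, point_split (fun t => (f t : ℝ≥0∞)) x,
          children_split hfin htree (fun t => (f t : ℝ≥0∞)) x, add_comm]
        congr 1
        exact tsum_congr fun y => (hUPF y).symm
      have hle : (∑' y : {y : S // x ⋖ y}, ENNReal.ofReal (F y)) ≤ ENNReal.ofReal (F x) := by
        rw [key]
        exact le_self_add
      rw [key]
      exact ENNReal.lt_add_right (ne_top_of_le_ne_top ENNReal.ofReal_ne_top hle)
        (by exact_mod_cast (hfpos x).ne')
    · have hA : (fun n : ℕ => ∑' x : {x : S // depth x = n}, ENNReal.ofReal (F x))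
          = fun n : ℕ => ∑' t : {t : S // n ≤ depth t}, (f t : ℝ≥0∞) := by
        funext n
        rw [← tail_split hfin htree (fun t => (f t : ℝ≥0∞)) n]
        exact tsum_congr fun x => hUPF x
      rw [hA, ENNReal.tendsto_atTop_zero]
      intro ε hε
      have h1 : (∑' t : S, (f t : ℝ≥0∞)) ≠ ⊤ := by
        rw [hfsum]
        exact ENNReal.one_ne_top
      obtain ⟨s, hs⟩ :=
        ((ENNReal.tendsto_tsum_compl_atTop_zero h1).eventually (gt_mem_nhds hε)).exists
      refine ⟨s.sup depth + 1, fun n hn => ?_⟩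
      refine le_trans ?_ hs.le
      refine tsum_le_of_subset (fun t => (f t : ℝ≥0∞)) ?_
      intro t ht hts
      have := Finset.le_sup (f := depth) hts
      have ht' : n ≤ depth t := ht
      omega
  · rintro ⟨h1, h2, h3⟩
    set G : S → ℝ≥0∞ := fun x => ENNReal.ofReal (F x) with hGdef
    have hGne : ∀ x : S, G x ≠ ⊤ := fun x => ENNReal.ofReal_ne_top
    have hCG : ∀ t : S, chSum G t < G t := h2
    have hfEne : ∀ t : S, resid G t ≠ ⊤ :=
      fun t => ne_top_of_le_ne_top (hGne t) tsub_le_self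
    have hfEpos : ∀ t : S, 0 < resid G t := fun t => tsub_pos_of_lt (hCG t)
    have key : ∀ x : S, (∑' t : {t : S // x ≤ t}, resid G t) = G x :=
      key_lemma hfin htree G hGne (fun t => (hCG t).le) h3
    have hco : ∀ t : S, ((resid G t).toNNReal : ℝ≥0∞) = resid G t :=
      fun t => ENNReal.coe_toNNReal (hfEne t)
    refine ⟨fun t => (resid G t).toNNReal, ?_, ?_, ?_⟩
    · intro t
      exact ENNReal.toNNReal_pos (hfEpos t).ne' (hfEne t)
    · calc (∑' t : S, ((resid G t).toNNReal : ℝ≥0∞)) = ∑' t : S, resid G t :=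
            tsum_congr fun t => hco t
        _ = ∑' t : {t : S // (⊥ : S) ≤ t}, resid G t :=
            ((Equiv.subtypeUnivEquiv (fun t => bot_le)).tsum_eq (resid G)).symm
        _ = G ⊥ := key ⊥
        _ = 1 := by rw [hGdef]; simp only [h1, ENNReal.ofReal_one]
    · intro x
      calc ENNReal.ofReal (F x) = G x := rfl
        _ = ∑' t : {t : S // x ≤ t}, resid G t := (key x).symm
        _ = ∑' t : {t : S // x ≤ t}, ((resid G t).toNNReal : ℝ≥0∞) :=
            tsum_congr fun t => (hco t).symm
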